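/- Fix a prime power q, an integer k ≥ 1, and an integer d' ≥ 1, and suppose a linear [n',k,d']_q-code exists with n' = n_q(k,d'). Then: (i) n_q(k, 2d', 1) ≤ 2·n_q(k,d'); (ii) n_q(k, d' + 2q^{k-1}, 1) ≤ 2·(q^k - 1)/(q - 1) + n_q(k,d'); and (iii) n_q(k, 3d' - 1, 1) ≤ 3·n_q(k,d') - 1. -/

import Mathlib

open scoped Classical

/-- The Hamming weight of a vector: the number of nonzero coordinates. -/
noncomputable def hamWt {F : Type} [Field F] {n : ℕ} (c : Fin n → F) : ℕ :=
  (Finset.univ.filter fun i => c i ≠ 0).card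

/-- `C` is a linear `[n,k,d]` code over `F`: a `k`-dimensional subspace of `F^n`
in which every nonzero codeword has Hamming weight at least `d`. -/
def IsCode {F : Type} [Field F] {n : ℕ} (k d : ℕ) (C : Submodule F (Fin n → F)) : Prop :=
  Module.finrank F ↥C = k ∧ ∀ c ∈ C, c ≠ 0 → d ≤ hamWt c

/-- `C ⊆ F^n` has locality `r`: every coordinate `i` has a recovery set `S` of at most `r`
other coordinates such that any two codewords agreeing on `S` agree at `i`. -/
def HasLocality {F : Type} [Field F] {n : ℕ} (C : Submodule F (Fin n → F)) (r : ℕ) : Prop :=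
  ∀ i : Fin n, ∃ S : Finset (Fin n), i ∉ S ∧ S.card ≤ r ∧
    ∀ c ∈ C, ∀ c' ∈ C, (∀ j ∈ S, c j = c' j) → c i = c' i

/-- There exists a linear `[n,k,d]_q` code (over some field with `q` elements). -/
def CodeExists (q n k d : ℕ) : Prop :=
  ∃ (F : Type) (_ : Field F), Nat.card F = q ∧
    ∃ C : Submodule F (Fin n → F), IsCode k d C

/-- There exists a linear `[n,k,d]_q` code with locality `r`. -/
def LRCExists (q n k d r : ℕ) : Prop :=
  ∃ (F : Type) (_ : Field F), Nat.card F = q ∧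
    ∃ C : Submodule F (Fin n → F), IsCode k d C ∧ HasLocality C r

/-- `n_q(k,d)`: the smallest length of a linear `[n,k,d]_q` code. -/
noncomputable def nCode (q k d : ℕ) : ℕ := sInf {n | CodeExists q n k d}

/-- `n_q(k,d,r)`: the smallest length of a linear `[n,k,d]_q` code with locality `r`. -/
noncomputable def nLRC (q k d r : ℕ) : ℕ := sInf {n | LRCExists q n k d r}

/-- There exists an `[n,k]_q` code with locality `r` (no condition on minimum distance). -/
def LRCExistsNoDist (q n k r : ℕ) : Prop :=
  ∃ (F : Type) (_ : Field F), Nat.card F = q ∧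
    ∃ C : Submodule F (Fin n → F), Module.finrank F ↥C = k ∧ HasLocality C r

/-- `n'_q(k,r)`: the smallest length of an `[n,k]_q` code with locality `r`. -/
noncomputable def nLRCNoDist (q k r : ℕ) : ℕ := sInf {n | LRCExistsNoDist q n k r}

/-- The dual code of `C`. -/
def dualCode {F : Type} [Field F] {n : ℕ} (C : Submodule F (Fin n → F)) : Set (Fin n → F) :=
  {x | ∀ c ∈ C, ∑ j, x j * c j = 0}

/-- `C` is projective: non-degenerate and no two coordinates are proportional. -/
def IsProjective {F : Type} [Field F] {n : ℕ} (C : Submodule F (Fin n → F)) : Prop :=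
  (∀ i : Fin n, ∃ c ∈ C, c i ≠ 0) ∧
    (∀ i j : Fin n, i ≠ j → ∀ lam : F, lam ≠ 0 → ∃ c ∈ C, c i ≠ lam * c j)

/-- The Griesmer bound `g_q(k,d) = ∑_{i=0}^{k-1} ⌈d/q^i⌉`. -/
noncomputable def griesmer (q k d : ℕ) : ℕ :=
  ∑ i ∈ Finset.range k, ⌈(d : ℚ) / (q : ℚ) ^ i⌉₊

section Aux

private lemma ncard_eq_filter {α : Type} [Fintype α] (P : α → Prop) [DecidablePred P] :
    Nat.card {a : α // P a} = (Finset.univ.filter P).card := by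
  rw [Nat.card_eq_fintype_card, Fintype.card_subtype]

private lemma hamWt_eq_ncard {F : Type} [Field F] {n : ℕ} (c : Fin n → F) :
    hamWt c = Nat.card {j : Fin n // c j ≠ 0} := by
  rw [ncard_eq_filter]
  rfl

private lemma master {F : Type} [Field F] {k d N : ℕ} (hd : 1 ≤ d)
    {α : Type} [Fintype α] (hcard : Fintype.card α = N) (col : α → (Fin k → F))
    (hwt : ∀ u : Fin k → F, u ≠ 0 →
      d ≤ Nat.card {a : α // (∑ i, u i * col a i) ≠ 0})
    (hloc : ∀ a : α, col a = 0 ∨ ∃ b, b ≠ a ∧ ∃ lam : F, lam ≠ 0 ∧ col b = lam • col a) :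
    ∃ C : Submodule F (Fin N → F), IsCode k d C ∧ HasLocality C 1 := by
  have e : Fin N ≃ α := (Fintype.equivFinOfCardEq hcard).symm
  let G : (Fin k → F) →ₗ[F] (Fin N → F) :=
    { toFun := fun u j => ∑ i, u i * col (e j) i
      map_add' := by
        intro u v; funext j
        simp [add_mul, Finset.sum_add_distrib]
      map_smul' := by
        intro c u; funext j
        simp [Finset.mul_sum, mul_assoc] }
  have hG : ∀ u j, G u j = ∑ i, u i * col (e j) i := fun _ _ => rfl
  have hwt' : ∀ u : Fin k → F, u ≠ 0 → d ≤ hamWt (G u) := by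
    intro u hu
    refine le_trans (hwt u hu) (le_of_eq ?_)
    rw [hamWt_eq_ncard]
    refine Nat.card_congr (Equiv.subtypeEquiv e.symm fun a => ?_)
    rw [hG, e.apply_symm_apply]
  have h0 : ∀ u : Fin k → F, G u = 0 → u = 0 := by
    intro u hu
    by_contra hne
    have h1 := hwt' u hne
    rw [hu] at h1
    simp [hamWt] at h1
    omega
  have hGinj : Function.Injective G :=
    LinearMap.ker_eq_bot.mp (LinearMap.ker_eq_bot'.mpr h0)
  have hrank : Module.finrank F ↥(LinearMap.range G) = k := by
    rw [LinearMap.finrank_range_of_inj hGinj, Module.finrank_fin_fun]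
  refine ⟨LinearMap.range G, ⟨hrank, ?_⟩, ?_⟩
  · rintro c ⟨u, rfl⟩ hc0
    refine hwt' u fun h => hc0 ?_
    rw [h, map_zero]
  · intro j
    rcases hloc (e j) with hz | ⟨b, hb, lam, hlam, hcolb⟩
    · refine ⟨∅, by simp, by simp, ?_⟩
      rintro c ⟨u, rfl⟩ c' ⟨u', rfl⟩ _
      rw [hG, hG]
      simp [hz]
    · refine ⟨{e.symm b}, ?_, by simp, ?_⟩
      · simp only [Finset.mem_singleton]
        intro hj
        exact hb (by rw [hj, e.apply_symm_apply])
      · rintro c ⟨u, rfl⟩ c' ⟨u', rfl⟩ hag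
        have h1 := hag (e.symm b) (Finset.mem_singleton_self _)
        rw [hG, hG] at h1 ⊢
        rw [e.apply_symm_apply] at h1
        have h2 : ∀ w : Fin k → F,
            (∑ i, w i * col b i) = lam * ∑ i, w i * col (e j) i := by
          intro w
          rw [Finset.mul_sum]
          refine Finset.sum_congr rfl fun i _ => ?_
          rw [hcolb]
          simp only [Pi.smul_apply, smul_eq_mul]
          ring
        rw [h2, h2] at h1
        exact mul_left_cancel₀ hlam h1

private lemma base_cols {n' k d' : ℕ} {F : Type} [Field F]
    (C0 : Submodule F (Fin n' → F)) (hC : IsCode k d' C0) :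
    ∃ col0 : Fin n' → (Fin k → F),
      ∀ u : Fin k → F, u ≠ 0 →
        d' ≤ Nat.card {j : Fin n' // (∑ i, u i * col0 j i) ≠ 0} := by
  let b := Module.finBasisOfFinrankEq F ↥C0 hC.1
  refine ⟨fun j i => (b i : Fin n' → F) j, ?_⟩
  intro u hu
  set c : ↥C0 := ∑ i, u i • b i with hc
  have hcne : c ≠ 0 := by
    intro h
    apply hu
    have h1 : b.equivFun.symm u = c := by
      rw [Module.Basis.equivFun_symm_apply, hc]
    have h2 : b.equivFun.symm u = b.equivFun.symm 0 := by
      rw [h1, h, map_zero]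
    exact b.equivFun.symm.injective h2
  have hcoord : ∀ j, (c : Fin n' → F) j = ∑ i, u i * (b i : Fin n' → F) j := by
    intro j
    rw [hc]
    rw [show ((∑ i, u i • b i : ↥C0) : Fin n' → F) = ∑ i, u i • (b i : Fin n' → F) by
      push_cast [AddSubmonoidClass.coe_finset_sum]; rfl]
    simp [Finset.sum_apply]
  have hCcoe : (c : Fin n' → F) ≠ 0 := by
    intro h
    exact hcne (by exact_mod_cast Submodule.coe_eq_zero.mp h)
  have hw := hC.2 c c.2 hCcoe
  rw [hamWt_eq_ncard] at hw
  refine le_trans hw (le_of_eq ?_)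
  exact Nat.card_congr (Equiv.subtypeEquivRight fun j => by rw [hcoord j])

private lemma ncard_prod_snd {β γ : Type} [Finite β] [Finite γ] (P : γ → Prop) :
    Nat.card {p : β × γ // P p.2} = Nat.card β * Nat.card {j : γ // P j} := by
  rw [← Nat.card_prod]
  exact Nat.card_congr
    ⟨fun x => (x.1.1, ⟨x.1.2, x.2⟩), fun x => ⟨(x.1, x.2.1), x.2.2⟩,
      fun _ => rfl, fun _ => rfl⟩

private lemma ncard_sum {β γ : Type} [Finite β] [Finite γ] (P : β ⊕ γ → Prop) :
    Nat.card {x : β ⊕ γ // P x}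
      = Nat.card {b : β // P (Sum.inl b)} + Nat.card {c : γ // P (Sum.inr c)} := by
  rw [← Nat.card_sum]
  exact Nat.card_congr Equiv.subtypeSum

private lemma ncard_le_succ {m : ℕ} (P : Fin (m + 1) → Prop) :
    Nat.card {j : Fin (m + 1) // P j}
      ≤ Nat.card {j : Fin m // P j.castSucc} + 1 := by
  rw [ncard_eq_filter, ncard_eq_filter]
  have hsub : Finset.univ.filter P ⊆
      insert (Fin.last m)
        ((Finset.univ.filter fun j : Fin m => P j.castSucc).image Fin.castSucc) := by
    intro j hj
    rcases Fin.eq_castSucc_or_eq_last j with ⟨j', rfl⟩ | rfl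
    · refine Finset.mem_insert_of_mem (Finset.mem_image_of_mem _ ?_)
      simpa using hj
    · exact Finset.mem_insert_self _ _
  calc (Finset.univ.filter P).card ≤ _ := Finset.card_le_card hsub
    _ ≤ ((Finset.univ.filter fun j : Fin m => P j.castSucc).image Fin.castSucc).card + 1 :=
        Finset.card_insert_le _ _
    _ ≤ _ := by rw [Finset.card_image_of_injective _ (Fin.castSucc_injective m)]

end Aux

section Proj

open Projectivization

private lemma fiber_card {F : Type} [Field F] [Fintype F] {k : ℕ}
    [Fintype (Projectivization F (Fin k → F))]
    (p : Projectivization F (Fin k → F)) :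
    (Finset.univ.filter fun w : {v : Fin k → F // v ≠ 0} =>
        Projectivization.mk' F w = p).card = Fintype.card F - 1 := by
  have hrep := p.rep_nonzero
  have hcount : (Finset.univ.filter fun x : F => x ≠ 0).card = Fintype.card F - 1 := by
    rw [Finset.filter_ne' Finset.univ 0, Finset.card_erase_of_mem (Finset.mem_univ _),
      Finset.card_univ]
  rw [← hcount]
  refine (Finset.card_bij (fun (x : F) hx => (⟨x • p.rep, ?_⟩ : {v : Fin k → F // v ≠ 0}))
    ?_ ?_ ?_).symm
  · exact smul_ne_zero (by simpa using hx) hrep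
  · intro x hx
    simp only [Finset.mem_filter, Finset.mem_univ, true_and] at hx ⊢
    rw [Projectivization.mk'_eq_mk]
    calc Projectivization.mk F (x • p.rep) (smul_ne_zero hx hrep)
        = Projectivization.mk F p.rep hrep := by
          rw [Projectivization.mk_eq_mk_iff]
          exact ⟨Units.mk0 x hx, rfl⟩
      _ = p := Projectivization.mk_rep p
  · intro x hx y hy hxy
    have h1 : x • p.rep = y • p.rep := congrArg Subtype.val hxy
    exact smul_left_injective F hrep h1
  · intro w hw
    simp only [Finset.mem_filter, Finset.mem_univ, true_and] at hw
    have h1 : Projectivization.mk F (w : Fin k → F) w.2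
        = Projectivization.mk F p.rep hrep := by
      rw [Projectivization.mk'_eq_mk] at hw
      rw [hw, Projectivization.mk_rep]
    obtain ⟨a, ha⟩ := (Projectivization.mk_eq_mk_iff F _ _ w.2 hrep).mp h1
    refine ⟨(a : F), by simp [a.ne_zero], ?_⟩
    exact Subtype.ext ha

private lemma proj_fiber {F : Type} [Field F] [Fintype F] {k : ℕ}
    [Fintype (Projectivization F (Fin k → F))]
    (T : Finset (Projectivization F (Fin k → F))) :
    (Finset.univ.filter fun w : {v : Fin k → F // v ≠ 0} =>
        Projectivization.mk' F w ∈ T).card = T.card * (Fintype.card F - 1) := by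
  rw [Finset.card_eq_sum_card_fiberwise
    (f := fun w : {v : Fin k → F // v ≠ 0} => Projectivization.mk' F w) (t := T)
    (s := Finset.univ.filter fun w : {v : Fin k → F // v ≠ 0} => Projectivization.mk' F w ∈ T)
    (fun w hw => (Finset.mem_filter.mp hw).2)]
  rw [Finset.sum_congr rfl (fun p hp => ?_), Finset.sum_const, smul_eq_mul]
  rw [show (Finset.univ.filter fun w : {v : Fin k → F // v ≠ 0} =>
      Projectivization.mk' F w ∈ T).filter (fun w => Projectivization.mk' F w = p)
      = Finset.univ.filter fun w : {v : Fin k → F // v ≠ 0} =>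
        Projectivization.mk' F w = p by
    ext w
    simp only [Finset.mem_filter, Finset.mem_univ, true_and]
    constructor
    · rintro ⟨_, h⟩; exact h
    · rintro h; exact ⟨by rw [h]; exact hp, h⟩]
  exact fiber_card p

private lemma proj_total {F : Type} [Field F] [Fintype F] {k : ℕ}
    [Fintype (Projectivization F (Fin k → F))] :
    Fintype.card (Projectivization F (Fin k → F)) * (Fintype.card F - 1)
      = Fintype.card F ^ k - 1 := by
  have h1 := proj_fiber (F := F) (k := k) (Finset.univ)
  rw [Finset.filter_true_of_mem (fun _ _ => Finset.mem_univ _), Finset.card_univ,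
    Finset.card_univ] at h1
  rw [← h1]
  rw [Fintype.card_subtype_compl (fun v : Fin k → F => v = 0)]
  simp [Fintype.card_subtype_eq (0 : Fin k → F), Fintype.card_fun]

end Proj

section Dual

private lemma dual_count {F : Type} [Field F] [Fintype F] {k : ℕ} (hk : 1 ≤ k)
    (u : Fin k → F) (hu : u ≠ 0) :
    (Finset.univ.filter fun v : Fin k → F => (∑ i, u i * v i) ≠ 0).card
      = Fintype.card F ^ k - Fintype.card F ^ (k - 1) := by
  classical
  let l : (Fin k → F) →ₗ[F] F :=
    { toFun := fun v => ∑ i, u i * v i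
      map_add' := by intro v w; simp [mul_add, Finset.sum_add_distrib]
      map_smul' := by intro c v; simp [Finset.mul_sum, mul_assoc, mul_left_comm] }
  have hl : ∀ v, l v = ∑ i, u i * v i := fun _ => rfl
  obtain ⟨i0, hi0⟩ : ∃ i, u i ≠ 0 := by
    by_contra hno
    push_neg at hno
    exact hu (funext hno)
  have hsurj : LinearMap.range l = ⊤ := by
    rw [LinearMap.range_eq_top]
    intro c
    refine ⟨fun j => if j = i0 then c * (u i0)⁻¹ else 0, ?_⟩
    rw [hl, Finset.sum_eq_single i0]
    · simp only [if_pos rfl, ↓reduceIte]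
      field_simp
    · intro i _ hi
      simp [hi]
    · intro h
      exact absurd (Finset.mem_univ i0) h
  have hker : Module.finrank F ↥(LinearMap.ker l) = k - 1 := by
    have h1 := LinearMap.finrank_range_add_finrank_ker l
    rw [hsurj, finrank_top, Module.finrank_self, Module.finrank_fin_fun] at h1
    omega
  have hcardker : Fintype.card ↥(LinearMap.ker l) = Fintype.card F ^ (k - 1) := by
    rw [Module.card_eq_pow_finrank (K := F), hker]
  have h2 : (Finset.univ.filter fun v : Fin k → F => (∑ i, u i * v i) = 0).card
      = Fintype.card F ^ (k - 1) := by
    rw [← hcardker]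
    rw [show (Fintype.card ↥(LinearMap.ker l))
        = Fintype.card {v : Fin k → F // (∑ i, u i * v i) = 0} from
      Fintype.card_congr (Equiv.subtypeEquivRight fun v => by
        rw [LinearMap.mem_ker, hl])]
    rw [Fintype.card_subtype]
  have h4 : Fintype.card (Fin k → F) = Fintype.card F ^ k := by
    simp [Fintype.card_fun]
  have hsplit : (Finset.univ.filter fun v : Fin k → F => (∑ i, u i * v i) ≠ 0)
      = Finset.univ \ (Finset.univ.filter fun v : Fin k → F => (∑ i, u i * v i) = 0) := by
    ext v
    simp
  rw [hsplit, Finset.card_sdiff_of_subset (Finset.filter_subset _ _), Finset.card_univ, h4, h2]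

private lemma projT_card {F : Type} [Field F] [Fintype F] {k : ℕ} (hk : 1 ≤ k)
    [Fintype (Projectivization F (Fin k → F))]
    (u : Fin k → F) (hu : u ≠ 0) :
    Nat.card {p : Projectivization F (Fin k → F) //
        (∑ i, u i * p.rep i) ≠ 0} = Fintype.card F ^ (k - 1) := by
  rw [ncard_eq_filter]
  have hq2 : 2 ≤ Fintype.card F := Fintype.one_lt_card
  have h1 := proj_fiber (Finset.univ.filter fun p : Projectivization F (Fin k → F) =>
    (∑ i, u i * p.rep i) ≠ 0)
  have hiff : ∀ w : {v : Fin k → F // v ≠ 0},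
      ((∑ i, u i * (Projectivization.mk' F w).rep i) ≠ 0)
        ↔ (∑ i, u i * (w : Fin k → F) i) ≠ 0 := by
    intro w
    obtain ⟨a, ha⟩ : ∃ a : Fˣ, a • (w : Fin k → F) = (Projectivization.mk' F w).rep := by
      refine (Projectivization.mk_eq_mk_iff F _ _ (Projectivization.rep_nonzero _) w.2).mp ?_
      rw [Projectivization.mk_rep, Projectivization.mk'_eq_mk]
    rw [← ha]
    have hsum : (∑ i, u i * ((a : F) • (w : Fin k → F)) i)
        = (a : F) * ∑ i, u i * (w : Fin k → F) i := by
      rw [Finset.mul_sum]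
      refine Finset.sum_congr rfl fun i _ => ?_
      simp only [Pi.smul_apply, smul_eq_mul]
      ring
    rw [show (a • (w : Fin k → F)) = ((a : F) • (w : Fin k → F)) from rfl, hsum]
    simp [a.ne_zero]
  have h2 : (Finset.univ.filter fun w : {v : Fin k → F // v ≠ 0} =>
        Projectivization.mk' F w ∈ (Finset.univ.filter
          fun p : Projectivization F (Fin k → F) => (∑ i, u i * p.rep i) ≠ 0))
      = Finset.univ.filter fun w : {v : Fin k → F // v ≠ 0} =>
        (∑ i, u i * (w : Fin k → F) i) ≠ 0 := by
    ext w
    simp only [Finset.mem_filter, Finset.mem_univ, true_and]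
    exact hiff w
  have h3 : (Finset.univ.filter fun w : {v : Fin k → F // v ≠ 0} =>
        (∑ i, u i * (w : Fin k → F) i) ≠ 0).card
      = (Finset.univ.filter fun v : Fin k → F => (∑ i, u i * v i) ≠ 0).card := by
    refine Finset.card_bij (fun w _ => (w : Fin k → F)) ?_ ?_ ?_
    · intro w hw
      simp only [Finset.mem_filter, Finset.mem_univ, true_and] at hw ⊢
      exact hw
    · intro w _ w' _ hww
      exact Subtype.ext hww
    · intro v hv
      simp only [Finset.mem_filter, Finset.mem_univ, true_and] at hv
      have hv0 : v ≠ 0 := by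
        intro h
        apply hv
        simp [h]
      exact ⟨⟨v, hv0⟩, by simpa using hv, rfl⟩
  rw [h2, h3, dual_count hk u hu] at h1
  have h5 : Fintype.card F ^ k - Fintype.card F ^ (k - 1)
      = Fintype.card F ^ (k - 1) * (Fintype.card F - 1) := by
    have hpow : Fintype.card F ^ k = Fintype.card F ^ (k - 1) * Fintype.card F := by
      rw [← pow_succ, Nat.sub_add_cancel hk]
    rw [Nat.mul_sub, mul_one, hpow]
  have h6 : (Finset.univ.filter fun p : Projectivization F (Fin k → F) =>
        (∑ i, u i * p.rep i) ≠ 0).card * (Fintype.card F - 1)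
      = Fintype.card F ^ (k - 1) * (Fintype.card F - 1) := h1.symm.trans h5
  exact Nat.eq_of_mul_eq_mul_right (Nat.sub_pos_of_lt hq2) h6

end Dual

section Cons

private lemma fin2_ne (x : Fin 2) : x + 1 ≠ x := by
  revert x
  decide

private lemma ncard_fin2 : Nat.card (Fin 2) = 2 := by
  simp [Nat.card_eq_fintype_card]

private lemma cons1 {F : Type} [Field F] [Fintype F] {q k d' n' : ℕ}
    (hqF : Nat.card F = q) (hd : 1 ≤ d') (col0 : Fin n' → (Fin k → F))
    (hcol0 : ∀ u : Fin k → F, u ≠ 0 →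
      d' ≤ Nat.card {j : Fin n' // (∑ i, u i * col0 j i) ≠ 0}) :
    LRCExists q (2 * n') k (2 * d') 1 := by
  have hcard : Fintype.card (Fin 2 × Fin n') = 2 * n' := by simp
  have hwt : ∀ u : Fin k → F, u ≠ 0 → 2 * d' ≤
      Nat.card {p : Fin 2 × Fin n' // (∑ i, u i * col0 p.2 i) ≠ 0} := by
    intro u hu
    rw [ncard_prod_snd (fun j : Fin n' => (∑ i, u i * col0 j i) ≠ 0), ncard_fin2]
    exact Nat.mul_le_mul_left 2 (hcol0 u hu)
  have hloc : ∀ p : Fin 2 × Fin n', col0 p.2 = 0 ∨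
      ∃ b : Fin 2 × Fin n', b ≠ p ∧ ∃ lam : F, lam ≠ 0 ∧ col0 b.2 = lam • col0 p.2 := by
    intro p
    right
    refine ⟨(p.1 + 1, p.2), ?_, 1, one_ne_zero, (one_smul F _).symm⟩
    intro hcontra
    exact fin2_ne p.1 (congrArg Prod.fst hcontra)
  obtain ⟨C, hC, hL⟩ := master (F := F) (d := 2 * d') (by omega) hcard
      (fun p : Fin 2 × Fin n' => col0 p.2) hwt hloc
  exact ⟨F, inferInstance, hqF, C, hC, hL⟩

private lemma cons3 {F : Type} [Field F] [Fintype F] {q k d' n' : ℕ}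
    (hqF : Nat.card F = q) (hd : 1 ≤ d') (hn : 1 ≤ n') (col0 : Fin n' → (Fin k → F))
    (hcol0 : ∀ u : Fin k → F, u ≠ 0 →
      d' ≤ Nat.card {j : Fin n' // (∑ i, u i * col0 j i) ≠ 0}) :
    LRCExists q (3 * n' - 1) k (3 * d' - 1) 1 := by
  obtain ⟨m, rfl⟩ : ∃ m, n' = m + 1 := ⟨n' - 1, by omega⟩
  have hcard : Fintype.card ((Fin 2 × Fin (m + 1)) ⊕ Fin m) = 3 * (m + 1) - 1 := by
    simp only [Fintype.card_sum, Fintype.card_prod, Fintype.card_fin]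
    omega
  have hwt : ∀ u : Fin k → F, u ≠ 0 → 3 * d' - 1 ≤
      Nat.card {a : (Fin 2 × Fin (m + 1)) ⊕ Fin m //
        (∑ i, u i * (Sum.elim (fun p : Fin 2 × Fin (m + 1) => col0 p.2)
          (fun j : Fin m => col0 j.castSucc)) a i) ≠ 0} := by
    intro u hu
    rw [ncard_sum]
    simp only [Sum.elim_inl, Sum.elim_inr]
    rw [ncard_prod_snd (fun j : Fin (m + 1) => (∑ i, u i * col0 j i) ≠ 0), ncard_fin2]
    have h1 := ncard_le_succ (fun j : Fin (m + 1) => (∑ i, u i * col0 j i) ≠ 0)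
    have h2 := hcol0 u hu
    omega
  have hloc : ∀ a : (Fin 2 × Fin (m + 1)) ⊕ Fin m,
      (Sum.elim (fun p : Fin 2 × Fin (m + 1) => col0 p.2)
        (fun j : Fin m => col0 j.castSucc)) a = 0 ∨
      ∃ b, b ≠ a ∧ ∃ lam : F, lam ≠ 0 ∧
        (Sum.elim (fun p : Fin 2 × Fin (m + 1) => col0 p.2)
          (fun j : Fin m => col0 j.castSucc)) b
        = lam • (Sum.elim (fun p : Fin 2 × Fin (m + 1) => col0 p.2)
          (fun j : Fin m => col0 j.castSucc)) a := by
    rintro (⟨i, p⟩ | j)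
    · right
      refine ⟨Sum.inl (i + 1, p), ?_, 1, one_ne_zero, (one_smul F _).symm⟩
      intro hcontra
      have h := Sum.inl_injective hcontra
      exact fin2_ne i (congrArg Prod.fst h)
    · right
      exact ⟨Sum.inl (0, j.castSucc), by simp, 1, one_ne_zero, (one_smul F _).symm⟩
  obtain ⟨C, hC, hL⟩ := master (F := F) (d := 3 * d' - 1) (by omega) hcard
      (Sum.elim (fun p : Fin 2 × Fin (m + 1) => col0 p.2)
        (fun j : Fin m => col0 j.castSucc)) hwt hloc
  exact ⟨F, inferInstance, hqF, C, hC, hL⟩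

end Cons

section Cons2

private lemma cons2 {F : Type} [Field F] [Fintype F] {q k d' n' : ℕ}
    (hqF : Nat.card F = q) (hk : 1 ≤ k) (hd : 1 ≤ d')
    (col0 : Fin n' → (Fin k → F))
    (hcol0 : ∀ u : Fin k → F, u ≠ 0 →
      d' ≤ Nat.card {j : Fin n' // (∑ i, u i * col0 j i) ≠ 0}) :
    LRCExists q (2 * ((q ^ k - 1) / (q - 1)) + n') k (d' + 2 * q ^ (k - 1)) 1 := by
  have hFq : Fintype.card F = q := by rw [← Nat.card_eq_fintype_card, hqF]
  haveI : Finite (Projectivization F (Fin k → F)) := Quotient.finite _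
  haveI : Fintype (Projectivization F (Fin k → F)) := Fintype.ofFinite _
  have hq2 : 2 ≤ q := by rw [← hFq]; exact Fintype.one_lt_card
  have htot := proj_total (F := F) (k := k)
  rw [hFq] at htot
  have hPcard : Fintype.card (Projectivization F (Fin k → F)) = (q ^ k - 1) / (q - 1) := by
    rw [← htot, Nat.mul_div_cancel _ (Nat.sub_pos_of_lt hq2)]
  have hcard : Fintype.card ((Fin 2 × Projectivization F (Fin k → F)) ⊕ Fin n')
      = 2 * ((q ^ k - 1) / (q - 1)) + n' := by
    rw [Fintype.card_sum, Fintype.card_prod, Fintype.card_fin, Fintype.card_fin, hPcard]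
  have hwt : ∀ u : Fin k → F, u ≠ 0 → d' + 2 * q ^ (k - 1) ≤
      Nat.card {a : (Fin 2 × Projectivization F (Fin k → F)) ⊕ Fin n' //
        (∑ i, u i * (Sum.elim
            (fun p : Fin 2 × Projectivization F (Fin k → F) => p.2.rep)
            (fun j : Fin n' => col0 j)) a i) ≠ 0} := by
    intro u hu
    rw [ncard_sum]
    simp only [Sum.elim_inl, Sum.elim_inr]
    rw [ncard_prod_snd (fun p : Projectivization F (Fin k → F) =>
      (∑ i, u i * p.rep i) ≠ 0), ncard_fin2]
    rw [projT_card hk u hu, hFq]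
    calc d' + 2 * q ^ (k - 1) = 2 * q ^ (k - 1) + d' := Nat.add_comm _ _
      _ ≤ _ := Nat.add_le_add_left (hcol0 u hu) _
  have hloc : ∀ a : (Fin 2 × Projectivization F (Fin k → F)) ⊕ Fin n',
      (Sum.elim (fun p : Fin 2 × Projectivization F (Fin k → F) => p.2.rep)
        (fun j : Fin n' => col0 j)) a = 0 ∨
      ∃ b, b ≠ a ∧ ∃ lam : F, lam ≠ 0 ∧
        (Sum.elim (fun p : Fin 2 × Projectivization F (Fin k → F) => p.2.rep)
          (fun j : Fin n' => col0 j)) b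
        = lam • (Sum.elim (fun p : Fin 2 × Projectivization F (Fin k → F) => p.2.rep)
          (fun j : Fin n' => col0 j)) a := by
    rintro (⟨i, p⟩ | j)
    · right
      refine ⟨Sum.inl (i + 1, p), ?_, 1, one_ne_zero, (one_smul F _).symm⟩
      intro hcontra
      have h := Sum.inl_injective hcontra
      exact fin2_ne i (congrArg Prod.fst h)
    · by_cases hz : col0 j = 0
      · left
        exact hz
      · right
        obtain ⟨a, ha⟩ : ∃ a : Fˣ,
            a • col0 j = (Projectivization.mk F (col0 j) hz).rep :=
          (Projectivization.mk_eq_mk_iff F _ _ (Projectivization.rep_nonzero _) hz).mp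
            (Projectivization.mk_rep _)
        refine ⟨Sum.inl (0, Projectivization.mk F (col0 j) hz), by simp,
          (a : F), a.ne_zero, ?_⟩
        exact ha.symm
  obtain ⟨C, hC, hL⟩ := master (F := F) (d := d' + 2 * q ^ (k - 1))
      (hd.trans (Nat.le_add_right d' _)) hcard
      (Sum.elim (fun p : Fin 2 × Projectivization F (Fin k → F) => p.2.rep)
        (fun j : Fin n' => col0 j)) hwt hloc
  exact ⟨F, inferInstance, hqF, C, hC, hL⟩

end Cons2


theorem constructions_r1 (q k d' : ℕ) (hq : IsPrimePow q) (hk : 1 ≤ k) (hd : 1 ≤ d')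
    (h : CodeExists q (nCode q k d') k d') :
    nLRC q k (2 * d') 1 ≤ 2 * nCode q k d' ∧
      nLRC q k (d' + 2 * q ^ (k - 1)) 1 ≤ 2 * ((q ^ k - 1) / (q - 1)) + nCode q k d' ∧
      nLRC q k (3 * d' - 1) 1 ≤ 3 * nCode q k d' - 1 := by
  obtain ⟨F, instF, hqF, C0, hcode⟩ := h
  letI : Field F := instF
  haveI : Finite F := Nat.finite_of_card_ne_zero (by rw [hqF]; have := hq.two_le; omega)
  haveI : Fintype F := Fintype.ofFinite F
  obtain ⟨col0, hcol0⟩ := base_cols C0 hcode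
  have hn' : 1 ≤ nCode q k d' := by
    have h1 : Module.finrank F ↥C0 ≤ Module.finrank F (Fin (nCode q k d') → F) :=
      Submodule.finrank_le C0
    rw [hcode.1, Module.finrank_fin_fun] at h1
    omega
  exact ⟨Nat.sInf_le (cons1 hqF hd col0 hcol0),
    Nat.sInf_le (cons2 hqF hk hd col0 hcol0),
    Nat.sInf_le (cons3 hqF hd hn' col0 hcol0)⟩
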